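/- Let λ be a partition and let i ≥ 1 satisfy i = 1 or λ_i < λ_{i−1}, so that λ+1_i (the sequence obtained from λ by replacing λ_i by λ_i+1) is again a partition. Assume every factor occurring in a denominator below is nonzero in K. Then (c'_{λ+1_i}/c'_λ) · (c_λ/c_{λ+1_i}) · A^+_{λ,i} = −q · A^-_{λ+1_i,i}. -/

import Mathlib

open Finset

noncomputable section

/-- The conjugate partition value `λ'_j`, computed using rows `1,…,L`
(correct whenever `L ≥ ℓ(λ)`). -/
def conjP (lam : ℕ → ℕ) (L j : ℕ) : ℕ :=
  ((Finset.Icc 1 L).filter (fun k => j ≤ lam k)).card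

/-- `c_λ = ∏_{s∈λ} (1 - q^{a_λ(s)} t^{l_λ(s)+1})`, computed using rows `1,…,L`. -/
def cP {K : Type*} [Field K] (q t : K) (lam : ℕ → ℕ) (L : ℕ) : K :=
  ∏ i ∈ Finset.Icc 1 L, ∏ j ∈ Finset.Icc 1 (lam i),
    (1 - q ^ ((lam i : ℤ) - (j : ℤ)) * t ^ ((conjP lam L j : ℤ) - (i : ℤ) + 1))

/-- `c'_λ = ∏_{s∈λ} (1 - q^{a_λ(s)+1} t^{l_λ(s)})`, computed using rows `1,…,L`. -/
def cP' {K : Type*} [Field K] (q t : K) (lam : ℕ → ℕ) (L : ℕ) : K :=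
  ∏ i ∈ Finset.Icc 1 L, ∏ j ∈ Finset.Icc 1 (lam i),
    (1 - q ^ ((lam i : ℤ) - (j : ℤ) + 1) * t ^ ((conjP lam L j : ℤ) - (i : ℤ)))

/-- `A^+_{λ,i}`. -/
def Aplus {K : Type*} [Field K] (q t : K) (lam : ℕ → ℕ) (i : ℕ) : K :=
  (1 - t) * ∏ j ∈ Finset.Icc 1 (i - 1),
    ((1 - q ^ ((lam i : ℤ) - (lam j : ℤ)) * t ^ ((j : ℤ) - (i : ℤ) + 1)) *
      (1 - q ^ ((lam i : ℤ) - (lam j : ℤ) + 1) * t ^ ((j : ℤ) - (i : ℤ) - 1))) /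
    ((1 - q ^ ((lam i : ℤ) - (lam j : ℤ)) * t ^ ((j : ℤ) - (i : ℤ))) *
      (1 - q ^ ((lam i : ℤ) - (lam j : ℤ) + 1) * t ^ ((j : ℤ) - (i : ℤ))))

/-- `A^-_{λ,i}`, with the product taken over `j = i+1,…,L` (correct whenever `L ≥ ℓ(λ)`). -/
def Aminus {K : Type*} [Field K] (q t : K) (lam : ℕ → ℕ) (L i : ℕ) : K :=
  (1 - t⁻¹) *
    ((1 - q ^ ((lam (i + 1) : ℤ) - (lam i : ℤ))) /
      (1 - q ^ ((lam (i + 1) : ℤ) - (lam i : ℤ) + 1) * t⁻¹)) *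
    ∏ j ∈ Finset.Icc (i + 1) L,
      ((1 - q ^ ((lam j : ℤ) - (lam i : ℤ) + 1) * t ^ ((i : ℤ) - (j : ℤ) - 1)) *
        (1 - q ^ ((lam (j + 1) : ℤ) - (lam i : ℤ)) * t ^ ((i : ℤ) - (j : ℤ)))) /
      ((1 - q ^ ((lam (j + 1) : ℤ) - (lam i : ℤ) + 1) * t ^ ((i : ℤ) - (j : ℤ) - 1)) *
        (1 - q ^ ((lam j : ℤ) - (lam i : ℤ)) * t ^ ((i : ℤ) - (j : ℤ))))

section
variable {K : Type*} [Field K]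

lemma myflip (x : K) (hx : x ≠ 0) : 1 - x = -x * (1 - x⁻¹) := by field_simp; ring

lemma myflip_ne {x : K} (hx : x ≠ 0) (h : 1 - x ≠ 0) : 1 - x⁻¹ ≠ 0 := by
  intro h0
  apply h
  rw [myflip x hx, h0, mul_zero]

lemma myflip4 {x1 x2 y1 y2 : K} (hx1 : x1 ≠ 0) (hx2 : x2 ≠ 0) (hy1 : y1 ≠ 0) (hy2 : y2 ≠ 0)
    (h : x1 * x2 = y1 * y2) :
    (1-x1)*(1-x2)*((1-y1⁻¹)*(1-y2⁻¹)) = (1-y1)*(1-y2)*((1-x1⁻¹)*(1-x2⁻¹)) := by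
  rw [myflip x1 hx1, myflip x2 hx2, myflip y1 hy1, myflip y2 hy2]
  linear_combination (1-x1⁻¹)*(1-x2⁻¹)*(1-y1⁻¹)*(1-y2⁻¹) * h

lemma mytele (f : ℕ → K) (b c : ℕ) (h : b ≤ c) :
    (∏ j ∈ Ioc b c, f j) * f (c+1) = f (b+1) * ∏ j ∈ Ioc b c, f (j+1) := by
  induction c, h using Nat.le_induction with
  | base => simp
  | succ c hbc ih =>
      rw [Finset.prod_Ioc_succ_top (by omega), Finset.prod_Ioc_succ_top (by omega)]
      linear_combination f (c+1+1) * ih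

lemma mysplit3 (f : ℕ → K) (i L : ℕ) (hi : 1 ≤ i) (hiL : i ≤ L) :
    ∏ k ∈ Icc 1 L, f k = (∏ k ∈ Icc 1 (i-1), f k) * f i * ∏ k ∈ Icc (i+1) L, f k := by
  have h1 : Icc 1 L = Ioc 0 L := by ext x; simp [mem_Icc, mem_Ioc]; omega
  have h2 : Icc 1 (i-1) = Ioc 0 (i-1) := by ext x; simp [mem_Icc, mem_Ioc]; omega
  have h3 : Icc (i+1) L = Ioc i L := by ext x; simp only [mem_Icc, mem_Ioc]; omega
  have h4 : Ioc (i-1) i = {i} := by ext x; simp only [mem_Ioc, mem_singleton]; omega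
  rw [h1, h2, h3, ← Finset.prod_Ioc_consecutive f (Nat.zero_le (i-1)) (by omega : i-1 ≤ L),
    ← Finset.prod_Ioc_consecutive f (by omega : i-1 ≤ i) hiL, h4, Finset.prod_singleton, mul_assoc]

lemma mysplitLeft (f : ℕ → K) (i L : ℕ) (hiL : i ≤ L) :
    ∏ k ∈ Icc i L, f k = f i * ∏ k ∈ Icc (i+1) L, f k := by
  have h : Icc i L = insert i (Icc (i+1) L) := by ext x; simp only [mem_Icc, mem_insert]; omega
  rw [h, Finset.prod_insert (by simp)]

lemma myanti (lam : ℕ → ℕ) (hmono : ∀ k, 1 ≤ k → lam (k + 1) ≤ lam k) :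
    ∀ k m, 1 ≤ k → k ≤ m → lam m ≤ lam k := by
  intro k m hk hkm
  induction m with
  | zero => omega
  | succ m ih =>
      rcases Nat.lt_or_ge k (m+1) with h | h
      · exact le_trans (hmono m (by omega)) (ih (by omega))
      · have : k = m + 1 := by omega
        rw [this]

lemma myconj_le (lam : ℕ → ℕ) (L j : ℕ) : conjP lam L j ≤ L := by
  calc conjP lam L j ≤ (Icc 1 L).card := Finset.card_filter_le _ _
  _ = L := by rw [Nat.card_Icc]; omega

lemma mygalois (lam : ℕ → ℕ) (L : ℕ) (hmono : ∀ k, 1 ≤ k → lam (k + 1) ≤ lam k)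
    (hL : ∀ k, L < k → lam k = 0) {j k : ℕ} (hj : 1 ≤ j) (hk : 1 ≤ k) :
    j ≤ lam k ↔ k ≤ conjP lam L j := by
  have anti := myanti lam hmono
  constructor
  · intro h
    have hkL : k ≤ L := by
      by_contra hc
      have := hL k (by omega); omega
    have hsub : Icc 1 k ⊆ (Icc 1 L).filter (fun m => j ≤ lam m) := by
      intro x hx
      simp only [mem_Icc] at hx
      simp only [mem_filter, mem_Icc]
      exact ⟨⟨hx.1, le_trans hx.2 hkL⟩, le_trans h (anti x k hx.1 hx.2)⟩
    calc k = (Icc 1 k).card := by rw [Nat.card_Icc]; omega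
    _ ≤ _ := Finset.card_le_card hsub
  · intro h
    by_contra hc
    push_neg at hc
    have hsub : (Icc 1 L).filter (fun m => j ≤ lam m) ⊆ Icc 1 (k-1) := by
      intro x hx
      simp only [mem_filter, mem_Icc] at hx
      simp only [mem_Icc]
      refine ⟨hx.1.1, ?_⟩
      by_contra hxk
      have hxk' : k ≤ x := by omega
      have := anti k x hk hxk'
      omega
    have : conjP lam L j ≤ (Icc 1 (k-1)).card := Finset.card_le_card hsub
    rw [Nat.card_Icc] at this
    omega

lemma myregroup (lam : ℕ → ℕ) (L i : ℕ) (hmono : ∀ k, 1 ≤ k → lam (k + 1) ≤ lam k)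
    (hL : ∀ k, L < k → lam k = 0) (hi : 1 ≤ i) (hiL : i ≤ L)
    (G : ℕ → ℕ → K) :
    ∏ j ∈ Icc 1 (lam i), G j (conjP lam L j) =
      ∏ k ∈ Icc i L, ∏ j ∈ Ioc (lam (k+1)) (lam k), G j k := by
  have anti := myanti lam hmono
  have hmaps : ∀ x ∈ Icc 1 (lam i), conjP lam L x ∈ Icc i L := by
    intro x hx
    simp only [mem_Icc] at hx ⊢
    refine ⟨(mygalois lam L hmono hL hx.1 hi).1 hx.2, myconj_le lam L x⟩
  rw [← Finset.prod_fiberwise_of_maps_to hmaps (fun j => G j (conjP lam L j))]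
  apply Finset.prod_congr rfl
  intro k hk
  simp only [mem_Icc] at hk
  have hfil : (Icc 1 (lam i)).filter (fun x => conjP lam L x = k) = Ioc (lam (k+1)) (lam k) := by
    ext j
    simp only [mem_filter, mem_Icc, mem_Ioc]
    constructor
    · rintro ⟨⟨hj1, hj2⟩, hcj⟩
      constructor
      · by_contra hc
        push_neg at hc
        have := (mygalois lam L hmono hL hj1 (by omega : 1 ≤ k+1)).1 hc
        omega
      · exact (mygalois lam L hmono hL hj1 (by omega : 1 ≤ k)).2 (by omega)
    · rintro ⟨hj1, hj2⟩
      have hj0 : 1 ≤ j := by omega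
      have h1 : k ≤ conjP lam L j := (mygalois lam L hmono hL hj0 (by omega)).1 hj2
      have h2 : ¬ (k + 1 ≤ conjP lam L j) := by
        intro hc
        have := (mygalois lam L hmono hL hj0 (by omega : 1 ≤ k+1)).2 hc
        omega
      refine ⟨⟨hj0, le_trans hj2 (anti i k hi hk.1)⟩, by omega⟩
  rw [← hfil]
  apply Finset.prod_congr rfl
  intro j hj
  simp only [mem_filter] at hj
  rw [hj.2]

lemma myconjeq (lam : ℕ → ℕ) (L i : ℕ) (mu : ℕ → ℕ)
    (hmu : mu = fun k => if k = i then lam i + 1 else lam k) :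
    ∀ j, j ≠ lam i + 1 → conjP mu L j = conjP lam L j := by
  intro j hj
  unfold conjP
  congr 1
  apply Finset.filter_congr
  intro k _
  by_cases h : k = i
  · subst h; rw [hmu]; simp only [eq_self_iff_true, if_true]; constructor <;> (intro; omega)
  · rw [hmu]; simp only [if_neg h]

lemma myconjlam (lam : ℕ → ℕ) (L i : ℕ)
    (hmono : ∀ k, 1 ≤ k → lam (k + 1) ≤ lam k)
    (hi : 1 ≤ i) (hiL : i ≤ L)
    (hadd : i = 1 ∨ lam i < lam (i - 1)) :
    conjP lam L (lam i + 1) = i - 1 := by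
  have anti := myanti lam hmono
  unfold conjP
  have h : (Icc 1 L).filter (fun k => lam i + 1 ≤ lam k) = Icc 1 (i-1) := by
    ext k
    simp only [mem_filter, mem_Icc]
    constructor
    · rintro ⟨⟨h1, h2⟩, h3⟩
      refine ⟨h1, ?_⟩
      by_contra hc
      have : i ≤ k := by omega
      have := anti i k hi this
      omega
    · rintro ⟨h1, h2⟩
      have hi2 : 2 ≤ i := by omega
      have hlt : lam i < lam (i-1) := by rcases hadd with h | h; omega; exact h
      have := anti k (i-1) h1 h2
      exact ⟨⟨h1, by omega⟩, by omega⟩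
  rw [h, Nat.card_Icc]
  omega

lemma myconjmu (lam : ℕ → ℕ) (L i : ℕ)
    (hmono : ∀ k, 1 ≤ k → lam (k + 1) ≤ lam k)
    (hi : 1 ≤ i) (hiL : i ≤ L)
    (hadd : i = 1 ∨ lam i < lam (i - 1))
    (mu : ℕ → ℕ) (hmu : mu = fun k => if k = i then lam i + 1 else lam k) :
    conjP mu L (lam i + 1) = i := by
  have anti := myanti lam hmono
  unfold conjP
  have h : (Icc 1 L).filter (fun k => lam i + 1 ≤ mu k) = Icc 1 i := by
    ext k
    simp only [mem_filter, mem_Icc]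
    by_cases hk : k = i
    · subst hk; rw [hmu]; simp only [eq_self_iff_true, if_true]
      constructor
      · rintro ⟨⟨h1, h2⟩, _⟩; omega
      · rintro ⟨h1, h2⟩; exact ⟨⟨h1, hiL⟩, by omega⟩
    · rw [hmu]; simp only [if_neg hk]
      constructor
      · rintro ⟨⟨h1, h2⟩, h3⟩
        refine ⟨h1, ?_⟩
        by_contra hc
        have : i ≤ k := by omega
        have := anti i k hi this
        omega
      · rintro ⟨h1, h2⟩
        have hk2 : k ≤ i - 1 := by omega
        have hi2 : 2 ≤ i := by omega
        have hlt : lam i < lam (i-1) := by rcases hadd with h | h; omega; exact h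
        have := anti k (i-1) h1 hk2
        exact ⟨⟨h1, by omega⟩, by omega⟩
  rw [h, Nat.card_Icc]
  omega

lemma myA1 (q t : K) (lam : ℕ → ℕ) (L i : ℕ)
    (hmono : ∀ k, 1 ≤ k → lam (k + 1) ≤ lam k)
    (hL : ∀ k, L < k → lam k = 0)
    (hi : 1 ≤ i) (hiL : i ≤ L)
    (hadd : i = 1 ∨ lam i < lam (i - 1))
    (mu : ℕ → ℕ) (hmu : mu = fun k => if k = i then lam i + 1 else lam k) :
    cP' q t mu L
      * (∏ k ∈ Icc 1 (i-1), (1 - q ^ ((lam k:ℤ) - (lam i:ℤ)) * t ^ ((i:ℤ) - 1 - (k:ℤ))))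
      * (∏ j ∈ Icc 1 (lam i), (1 - q ^ ((lam i:ℤ) - (j:ℤ) + 1) * t ^ ((conjP lam L j:ℤ) - (i:ℤ)))) =
    cP' q t lam L * (1 - q)
      * (∏ k ∈ Icc 1 (i-1), (1 - q ^ ((lam k:ℤ) - (lam i:ℤ)) * t ^ ((i:ℤ) - (k:ℤ))))
      * (∏ j ∈ Icc 1 (lam i), (1 - q ^ ((lam i:ℤ) - (j:ℤ) + 2) * t ^ ((conjP lam L j:ℤ) - (i:ℤ)))) := by
  have anti := myanti lam hmono
  have hmui : mu i = lam i + 1 := by simp [hmu]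
  have hmuk : ∀ k, k ≠ i → mu k = lam k := by intro k hk; simp [hmu, hk]
  have hconjeq := myconjeq lam L i mu hmu
  rw [cP', cP', mysplit3 _ i L hi hiL, mysplit3 _ i L hi hiL]
  -- tail products agree
  have h3 : (∏ k ∈ Icc (i+1) L, ∏ j ∈ Icc 1 (mu k),
        (1 - q ^ ((mu k:ℤ) - (j:ℤ) + 1) * t ^ ((conjP mu L j:ℤ) - (k:ℤ)))) =
      (∏ k ∈ Icc (i+1) L, ∏ j ∈ Icc 1 (lam k),
        (1 - q ^ ((lam k:ℤ) - (j:ℤ) + 1) * t ^ ((conjP lam L j:ℤ) - (k:ℤ)))) := by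
    apply Finset.prod_congr rfl
    intro k hk
    simp only [mem_Icc] at hk
    rw [hmuk k (by omega)]
    apply Finset.prod_congr rfl
    intro j hj
    simp only [mem_Icc] at hj
    have hjle : j ≤ lam i := le_trans hj.2 (anti i k hi (by omega))
    rw [hconjeq j (by omega)]
  -- head products
  have h1 : (∏ k ∈ Icc 1 (i-1), ∏ j ∈ Icc 1 (mu k),
        (1 - q ^ ((mu k:ℤ) - (j:ℤ) + 1) * t ^ ((conjP mu L j:ℤ) - (k:ℤ))))
      * (∏ k ∈ Icc 1 (i-1), (1 - q ^ ((lam k:ℤ) - (lam i:ℤ)) * t ^ ((i:ℤ) - 1 - (k:ℤ)))) =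
      (∏ k ∈ Icc 1 (i-1), ∏ j ∈ Icc 1 (lam k),
        (1 - q ^ ((lam k:ℤ) - (j:ℤ) + 1) * t ^ ((conjP lam L j:ℤ) - (k:ℤ))))
      * (∏ k ∈ Icc 1 (i-1), (1 - q ^ ((lam k:ℤ) - (lam i:ℤ)) * t ^ ((i:ℤ) - (k:ℤ)))) := by
    rw [← Finset.prod_mul_distrib, ← Finset.prod_mul_distrib]
    apply Finset.prod_congr rfl
    intro k hk
    simp only [mem_Icc] at hk
    have hi2 : 2 ≤ i := by omega
    have hlt : lam i < lam (i-1) := by rcases hadd with h | h; omega; exact h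
    have hlamk : lam i + 1 ≤ lam k := le_trans (by omega) (anti k (i-1) hk.1 hk.2)
    have hmem : lam i + 1 ∈ Icc 1 (lam k) := by simp only [mem_Icc]; omega
    rw [hmuk k (by omega)]
    rw [← Finset.mul_prod_erase _ _ hmem, ← Finset.mul_prod_erase _ _ hmem]
    have he : (∏ j ∈ (Icc 1 (lam k)).erase (lam i + 1),
          (1 - q ^ ((lam k:ℤ) - (j:ℤ) + 1) * t ^ ((conjP mu L j:ℤ) - (k:ℤ)))) =
        (∏ j ∈ (Icc 1 (lam k)).erase (lam i + 1),
          (1 - q ^ ((lam k:ℤ) - (j:ℤ) + 1) * t ^ ((conjP lam L j:ℤ) - (k:ℤ)))) := by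
      apply Finset.prod_congr rfl
      intro j hj
      rw [hconjeq j (Finset.ne_of_mem_erase hj)]
    rw [he, myconjmu lam L i hmono hi hiL hadd mu hmu,
      myconjlam lam L i hmono hi hiL hadd,
      show ((lam k:ℤ) - ((lam i + 1 : ℕ):ℤ) + 1) = (lam k:ℤ) - (lam i:ℤ) from by push_cast; ring,
      Nat.cast_sub hi, Nat.cast_one]
    ring
  -- row i for mu
  have h2 : (∏ j ∈ Icc 1 (mu i),
        (1 - q ^ ((mu i:ℤ) - (j:ℤ) + 1) * t ^ ((conjP mu L j:ℤ) - (i:ℤ)))) =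
      (1 - q) * (∏ j ∈ Icc 1 (lam i),
        (1 - q ^ ((lam i:ℤ) - (j:ℤ) + 2) * t ^ ((conjP lam L j:ℤ) - (i:ℤ)))) := by
    rw [hmui, Finset.prod_Icc_succ_top (by omega : 1 ≤ lam i + 1)]
    rw [myconjmu lam L i hmono hi hiL hadd mu hmu,
      show (((lam i + 1 : ℕ):ℤ) - ((lam i + 1 : ℕ):ℤ) + 1) = (1:ℤ) from by push_cast; ring,
      zpow_one, sub_self, zpow_zero, mul_one]
    have hrow : (∏ j ∈ Icc 1 (lam i),
          (1 - q ^ (((lam i + 1 : ℕ):ℤ) - (j:ℤ) + 1) * t ^ ((conjP mu L j:ℤ) - (i:ℤ)))) =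
        (∏ j ∈ Icc 1 (lam i),
          (1 - q ^ ((lam i:ℤ) - (j:ℤ) + 2) * t ^ ((conjP lam L j:ℤ) - (i:ℤ)))) := by
      apply Finset.prod_congr rfl
      intro j hj
      simp only [mem_Icc] at hj
      rw [hconjeq j (by omega),
        show (((lam i + 1 : ℕ):ℤ) - (j:ℤ) + 1) = (lam i:ℤ) - (j:ℤ) + 2 from by push_cast; ring]
    rw [hrow]
    ring
  rw [h3, h2]
  linear_combination ((1 - q) * (∏ j ∈ Icc 1 (lam i),
        (1 - q ^ ((lam i:ℤ) - (j:ℤ) + 2) * t ^ ((conjP lam L j:ℤ) - (i:ℤ))))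
      * (∏ k ∈ Icc (i+1) L, ∏ j ∈ Icc 1 (lam k),
        (1 - q ^ ((lam k:ℤ) - (j:ℤ) + 1) * t ^ ((conjP lam L j:ℤ) - (k:ℤ))))
      * (∏ j ∈ Icc 1 (lam i),
        (1 - q ^ ((lam i:ℤ) - (j:ℤ) + 1) * t ^ ((conjP lam L j:ℤ) - (i:ℤ))))) * h1

lemma myA2 (q t : K) (lam : ℕ → ℕ) (L i : ℕ)
    (hmono : ∀ k, 1 ≤ k → lam (k + 1) ≤ lam k)
    (hL : ∀ k, L < k → lam k = 0)
    (hi : 1 ≤ i) (hiL : i ≤ L)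
    (hadd : i = 1 ∨ lam i < lam (i - 1))
    (mu : ℕ → ℕ) (hmu : mu = fun k => if k = i then lam i + 1 else lam k) :
    cP q t mu L
      * (∏ k ∈ Icc 1 (i-1), (1 - q ^ ((lam k:ℤ) - (lam i:ℤ) - 1) * t ^ ((i:ℤ) - (k:ℤ))))
      * (∏ j ∈ Icc 1 (lam i), (1 - q ^ ((lam i:ℤ) - (j:ℤ)) * t ^ ((conjP lam L j:ℤ) - (i:ℤ) + 1))) =
    cP q t lam L * (1 - t)
      * (∏ k ∈ Icc 1 (i-1), (1 - q ^ ((lam k:ℤ) - (lam i:ℤ) - 1) * t ^ ((i:ℤ) - (k:ℤ) + 1)))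
      * (∏ j ∈ Icc 1 (lam i), (1 - q ^ ((lam i:ℤ) - (j:ℤ) + 1) * t ^ ((conjP lam L j:ℤ) - (i:ℤ) + 1))) := by
  have anti := myanti lam hmono
  have hmui : mu i = lam i + 1 := by simp [hmu]
  have hmuk : ∀ k, k ≠ i → mu k = lam k := by intro k hk; simp [hmu, hk]
  have hconjeq := myconjeq lam L i mu hmu
  rw [cP, cP, mysplit3 _ i L hi hiL, mysplit3 _ i L hi hiL]
  have h3 : (∏ k ∈ Icc (i+1) L, ∏ j ∈ Icc 1 (mu k),
        (1 - q ^ ((mu k:ℤ) - (j:ℤ)) * t ^ ((conjP mu L j:ℤ) - (k:ℤ) + 1))) =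
      (∏ k ∈ Icc (i+1) L, ∏ j ∈ Icc 1 (lam k),
        (1 - q ^ ((lam k:ℤ) - (j:ℤ)) * t ^ ((conjP lam L j:ℤ) - (k:ℤ) + 1))) := by
    apply Finset.prod_congr rfl
    intro k hk
    simp only [mem_Icc] at hk
    rw [hmuk k (by omega)]
    apply Finset.prod_congr rfl
    intro j hj
    simp only [mem_Icc] at hj
    have hjle : j ≤ lam i := le_trans hj.2 (anti i k hi (by omega))
    rw [hconjeq j (by omega)]
  have h1 : (∏ k ∈ Icc 1 (i-1), ∏ j ∈ Icc 1 (mu k),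
        (1 - q ^ ((mu k:ℤ) - (j:ℤ)) * t ^ ((conjP mu L j:ℤ) - (k:ℤ) + 1)))
      * (∏ k ∈ Icc 1 (i-1), (1 - q ^ ((lam k:ℤ) - (lam i:ℤ) - 1) * t ^ ((i:ℤ) - (k:ℤ)))) =
      (∏ k ∈ Icc 1 (i-1), ∏ j ∈ Icc 1 (lam k),
        (1 - q ^ ((lam k:ℤ) - (j:ℤ)) * t ^ ((conjP lam L j:ℤ) - (k:ℤ) + 1)))
      * (∏ k ∈ Icc 1 (i-1), (1 - q ^ ((lam k:ℤ) - (lam i:ℤ) - 1) * t ^ ((i:ℤ) - (k:ℤ) + 1))) := by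
    rw [← Finset.prod_mul_distrib, ← Finset.prod_mul_distrib]
    apply Finset.prod_congr rfl
    intro k hk
    simp only [mem_Icc] at hk
    have hi2 : 2 ≤ i := by omega
    have hlt : lam i < lam (i-1) := by rcases hadd with h | h; omega; exact h
    have hlamk : lam i + 1 ≤ lam k := le_trans (by omega) (anti k (i-1) hk.1 hk.2)
    have hmem : lam i + 1 ∈ Icc 1 (lam k) := by simp only [mem_Icc]; omega
    rw [hmuk k (by omega)]
    rw [← Finset.mul_prod_erase _ _ hmem, ← Finset.mul_prod_erase _ _ hmem]
    have he : (∏ j ∈ (Icc 1 (lam k)).erase (lam i + 1),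
          (1 - q ^ ((lam k:ℤ) - (j:ℤ)) * t ^ ((conjP mu L j:ℤ) - (k:ℤ) + 1))) =
        (∏ j ∈ (Icc 1 (lam k)).erase (lam i + 1),
          (1 - q ^ ((lam k:ℤ) - (j:ℤ)) * t ^ ((conjP lam L j:ℤ) - (k:ℤ) + 1))) := by
      apply Finset.prod_congr rfl
      intro j hj
      rw [hconjeq j (Finset.ne_of_mem_erase hj)]
    rw [he, myconjmu lam L i hmono hi hiL hadd mu hmu,
      myconjlam lam L i hmono hi hiL hadd,
      show ((lam k:ℤ) - ((lam i + 1 : ℕ):ℤ)) = (lam k:ℤ) - (lam i:ℤ) - 1 from by push_cast; ring,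
      Nat.cast_sub hi, Nat.cast_one,
      show ((i:ℤ) - 1 - (k:ℤ) + 1) = (i:ℤ) - (k:ℤ) from by ring]
    ring
  have h2 : (∏ j ∈ Icc 1 (mu i),
        (1 - q ^ ((mu i:ℤ) - (j:ℤ)) * t ^ ((conjP mu L j:ℤ) - (i:ℤ) + 1))) =
      (1 - t) * (∏ j ∈ Icc 1 (lam i),
        (1 - q ^ ((lam i:ℤ) - (j:ℤ) + 1) * t ^ ((conjP lam L j:ℤ) - (i:ℤ) + 1))) := by
    rw [hmui, Finset.prod_Icc_succ_top (by omega : 1 ≤ lam i + 1)]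
    rw [myconjmu lam L i hmono hi hiL hadd mu hmu,
      show (((lam i + 1 : ℕ):ℤ) - ((lam i + 1 : ℕ):ℤ)) = (0:ℤ) from by push_cast; ring,
      zpow_zero, one_mul,
      show ((i:ℤ) - (i:ℤ) + 1) = (1:ℤ) from by ring, zpow_one]
    have hrow : (∏ j ∈ Icc 1 (lam i),
          (1 - q ^ (((lam i + 1 : ℕ):ℤ) - (j:ℤ)) * t ^ ((conjP mu L j:ℤ) - (i:ℤ) + 1))) =
        (∏ j ∈ Icc 1 (lam i),
          (1 - q ^ ((lam i:ℤ) - (j:ℤ) + 1) * t ^ ((conjP lam L j:ℤ) - (i:ℤ) + 1))) := by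
      apply Finset.prod_congr rfl
      intro j hj
      simp only [mem_Icc] at hj
      rw [hconjeq j (by omega),
        show (((lam i + 1 : ℕ):ℤ) - (j:ℤ)) = (lam i:ℤ) - (j:ℤ) + 1 from by push_cast; ring]
    rw [hrow]
    ring
  rw [h3, h2]
  linear_combination ((1 - t) * (∏ j ∈ Icc 1 (lam i),
        (1 - q ^ ((lam i:ℤ) - (j:ℤ) + 1) * t ^ ((conjP lam L j:ℤ) - (i:ℤ) + 1)))
      * (∏ k ∈ Icc (i+1) L, ∏ j ∈ Icc 1 (lam k),
        (1 - q ^ ((lam k:ℤ) - (j:ℤ)) * t ^ ((conjP lam L j:ℤ) - (k:ℤ) + 1)))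
      * (∏ j ∈ Icc 1 (lam i),
        (1 - q ^ ((lam i:ℤ) - (j:ℤ)) * t ^ ((conjP lam L j:ℤ) - (i:ℤ) + 1)))) * h1

lemma myB1 (q t : K) (lam : ℕ → ℕ) (L i : ℕ)
    (hmono : ∀ k, 1 ≤ k → lam (k + 1) ≤ lam k)
    (hL : ∀ k, L < k → lam k = 0)
    (hi : 1 ≤ i) (hiL : i ≤ L) :
    (∏ j ∈ Icc 1 (lam i), (1 - q ^ ((lam i:ℤ) - (j:ℤ) + 2) * t ^ ((conjP lam L j:ℤ) - (i:ℤ))))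
      * (∏ k ∈ Icc i L, (1 - q ^ ((lam i:ℤ) + 1 - (lam k:ℤ)) * t ^ ((k:ℤ) - (i:ℤ)))) =
    (∏ j ∈ Icc 1 (lam i), (1 - q ^ ((lam i:ℤ) - (j:ℤ) + 1) * t ^ ((conjP lam L j:ℤ) - (i:ℤ))))
      * (∏ k ∈ Icc i L, (1 - q ^ ((lam i:ℤ) + 1 - (lam (k+1):ℤ)) * t ^ ((k:ℤ) - (i:ℤ)))) := by
  have e1 : (∏ j ∈ Icc 1 (lam i), (1 - q ^ ((lam i:ℤ) - (j:ℤ) + 2) * t ^ ((conjP lam L j:ℤ) - (i:ℤ)))) =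
      ∏ k ∈ Icc i L, ∏ j ∈ Ioc (lam (k+1)) (lam k),
        (1 - q ^ ((lam i:ℤ) - (j:ℤ) + 2) * t ^ ((k:ℤ) - (i:ℤ))) :=
    myregroup lam L i hmono hL hi hiL
      (fun j k => 1 - q ^ ((lam i:ℤ) - (j:ℤ) + 2) * t ^ ((k:ℤ) - (i:ℤ)))
  have e2 : (∏ j ∈ Icc 1 (lam i), (1 - q ^ ((lam i:ℤ) - (j:ℤ) + 1) * t ^ ((conjP lam L j:ℤ) - (i:ℤ)))) =
      ∏ k ∈ Icc i L, ∏ j ∈ Ioc (lam (k+1)) (lam k),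
        (1 - q ^ ((lam i:ℤ) - (j:ℤ) + 1) * t ^ ((k:ℤ) - (i:ℤ))) :=
    myregroup lam L i hmono hL hi hiL
      (fun j k => 1 - q ^ ((lam i:ℤ) - (j:ℤ) + 1) * t ^ ((k:ℤ) - (i:ℤ)))
  rw [e1, e2, ← Finset.prod_mul_distrib, ← Finset.prod_mul_distrib]
  apply Finset.prod_congr rfl
  intro k hk
  simp only [mem_Icc] at hk
  have h := mytele (fun j => 1 - q ^ ((lam i:ℤ) - (j:ℤ) + 2) * t ^ ((k:ℤ) - (i:ℤ)))
    (lam (k+1)) (lam k) (hmono k (by omega))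
  rw [show (lam i:ℤ) + 1 - (lam k:ℤ) = (lam i:ℤ) - ((lam k + 1 : ℕ):ℤ) + 2 from by push_cast; ring,
    show (lam i:ℤ) + 1 - (lam (k+1):ℤ) = (lam i:ℤ) - ((lam (k+1) + 1 : ℕ):ℤ) + 2 from by push_cast; ring]
  have hbody : (∏ j ∈ Ioc (lam (k+1)) (lam k),
      (1 - q ^ ((lam i:ℤ) - (j:ℤ) + 1) * t ^ ((k:ℤ) - (i:ℤ)))) =
      ∏ j ∈ Ioc (lam (k+1)) (lam k),
      (1 - q ^ ((lam i:ℤ) - ((j+1 : ℕ):ℤ) + 2) * t ^ ((k:ℤ) - (i:ℤ))) := by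
    apply Finset.prod_congr rfl
    intro j _
    rw [show (lam i:ℤ) - (j:ℤ) + 1 = (lam i:ℤ) - ((j+1 : ℕ):ℤ) + 2 from by push_cast; ring]
  rw [hbody]
  linear_combination h

lemma myB2 (q t : K) (lam : ℕ → ℕ) (L i : ℕ)
    (hmono : ∀ k, 1 ≤ k → lam (k + 1) ≤ lam k)
    (hL : ∀ k, L < k → lam k = 0)
    (hi : 1 ≤ i) (hiL : i ≤ L) :
    (∏ j ∈ Icc 1 (lam i), (1 - q ^ ((lam i:ℤ) - (j:ℤ) + 1) * t ^ ((conjP lam L j:ℤ) - (i:ℤ) + 1)))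
      * (∏ k ∈ Icc i L, (1 - q ^ ((lam i:ℤ) - (lam k:ℤ)) * t ^ ((k:ℤ) - (i:ℤ) + 1))) =
    (∏ k ∈ Icc i L, (1 - q ^ ((lam i:ℤ) - (lam (k+1):ℤ)) * t ^ ((k:ℤ) - (i:ℤ) + 1)))
      * (∏ j ∈ Icc 1 (lam i), (1 - q ^ ((lam i:ℤ) - (j:ℤ)) * t ^ ((conjP lam L j:ℤ) - (i:ℤ) + 1))) := by
  have e1 : (∏ j ∈ Icc 1 (lam i), (1 - q ^ ((lam i:ℤ) - (j:ℤ) + 1) * t ^ ((conjP lam L j:ℤ) - (i:ℤ) + 1))) =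
      ∏ k ∈ Icc i L, ∏ j ∈ Ioc (lam (k+1)) (lam k),
        (1 - q ^ ((lam i:ℤ) - (j:ℤ) + 1) * t ^ ((k:ℤ) - (i:ℤ) + 1)) :=
    myregroup lam L i hmono hL hi hiL
      (fun j k => 1 - q ^ ((lam i:ℤ) - (j:ℤ) + 1) * t ^ ((k:ℤ) - (i:ℤ) + 1))
  have e2 : (∏ j ∈ Icc 1 (lam i), (1 - q ^ ((lam i:ℤ) - (j:ℤ)) * t ^ ((conjP lam L j:ℤ) - (i:ℤ) + 1))) =
      ∏ k ∈ Icc i L, ∏ j ∈ Ioc (lam (k+1)) (lam k),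
        (1 - q ^ ((lam i:ℤ) - (j:ℤ)) * t ^ ((k:ℤ) - (i:ℤ) + 1)) :=
    myregroup lam L i hmono hL hi hiL
      (fun j k => 1 - q ^ ((lam i:ℤ) - (j:ℤ)) * t ^ ((k:ℤ) - (i:ℤ) + 1))
  rw [e1, e2, ← Finset.prod_mul_distrib, ← Finset.prod_mul_distrib]
  apply Finset.prod_congr rfl
  intro k hk
  simp only [mem_Icc] at hk
  have h := mytele (fun j => 1 - q ^ ((lam i:ℤ) - (j:ℤ) + 1) * t ^ ((k:ℤ) - (i:ℤ) + 1))
    (lam (k+1)) (lam k) (hmono k (by omega))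
  rw [show (lam i:ℤ) - (lam k:ℤ) = (lam i:ℤ) - ((lam k + 1 : ℕ):ℤ) + 1 from by push_cast; ring,
    show (lam i:ℤ) - (lam (k+1):ℤ) = (lam i:ℤ) - ((lam (k+1) + 1 : ℕ):ℤ) + 1 from by push_cast; ring]
  have hbody : (∏ j ∈ Ioc (lam (k+1)) (lam k),
      (1 - q ^ ((lam i:ℤ) - (j:ℤ)) * t ^ ((k:ℤ) - (i:ℤ) + 1))) =
      ∏ j ∈ Ioc (lam (k+1)) (lam k),
      (1 - q ^ ((lam i:ℤ) - ((j+1 : ℕ):ℤ) + 1) * t ^ ((k:ℤ) - (i:ℤ) + 1)) := by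
    apply Finset.prod_congr rfl
    intro j _
    rw [show (lam i:ℤ) - (j:ℤ) = (lam i:ℤ) - ((j+1 : ℕ):ℤ) + 1 from by push_cast; ring]
  rw [hbody]
  linear_combination h

lemma invpow (q t : K) (hq : q ≠ 0) (ht : t ≠ 0) (a b c d : ℤ) (h1 : a + c = 0) (h2 : b + d = 0) :
    (q ^ a * t ^ b)⁻¹ = q ^ c * t ^ d := by
  rw [show c = -a from by omega, show d = -b from by omega, zpow_neg, zpow_neg, mul_inv]

lemma mulpow (q t : K) (hq : q ≠ 0) (ht : t ≠ 0) (a b c d e f g h' : ℤ)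
    (h1 : a + c = e + g) (h2 : b + d = f + h') :
    q ^ a * t ^ b * (q ^ c * t ^ d) = q ^ e * t ^ f * (q ^ g * t ^ h') := by
  rw [mul_mul_mul_comm, ← zpow_add₀ hq, ← zpow_add₀ ht, mul_mul_mul_comm, ← zpow_add₀ hq,
    ← zpow_add₀ ht, h1, h2]

lemma pow_ne (q t : K) (hq : q ≠ 0) (ht : t ≠ 0) (a b : ℤ) : q ^ a * t ^ b ≠ 0 :=
  mul_ne_zero (zpow_ne_zero _ hq) (zpow_ne_zero _ ht)

lemma myC (q t : K) (hq : q ≠ 0) (ht : t ≠ 0) (lam : ℕ → ℕ) (i : ℕ) :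
    (∏ k ∈ Icc 1 (i-1), (1 - q ^ ((lam k:ℤ) - (lam i:ℤ)) * t ^ ((i:ℤ) - (k:ℤ))))
      * (∏ k ∈ Icc 1 (i-1), (1 - q ^ ((lam k:ℤ) - (lam i:ℤ) - 1) * t ^ ((i:ℤ) - (k:ℤ))))
      * (∏ k ∈ Icc 1 (i-1),
        ((1 - q ^ ((lam i:ℤ) - (lam k:ℤ)) * t ^ ((k:ℤ) - (i:ℤ) + 1)) *
          (1 - q ^ ((lam i:ℤ) - (lam k:ℤ) + 1) * t ^ ((k:ℤ) - (i:ℤ) - 1)))) =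
    (∏ k ∈ Icc 1 (i-1), (1 - q ^ ((lam k:ℤ) - (lam i:ℤ)) * t ^ ((i:ℤ) - 1 - (k:ℤ))))
      * (∏ k ∈ Icc 1 (i-1), (1 - q ^ ((lam k:ℤ) - (lam i:ℤ) - 1) * t ^ ((i:ℤ) - (k:ℤ) + 1)))
      * (∏ k ∈ Icc 1 (i-1),
        ((1 - q ^ ((lam i:ℤ) - (lam k:ℤ)) * t ^ ((k:ℤ) - (i:ℤ))) *
          (1 - q ^ ((lam i:ℤ) - (lam k:ℤ) + 1) * t ^ ((k:ℤ) - (i:ℤ))))) := by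
  rw [← Finset.prod_mul_distrib, ← Finset.prod_mul_distrib,
    ← Finset.prod_mul_distrib, ← Finset.prod_mul_distrib]
  apply Finset.prod_congr rfl
  intro k _
  have e := myflip4
    (pow_ne q t hq ht ((lam k:ℤ) - (lam i:ℤ)) ((i:ℤ) - (k:ℤ)))
    (pow_ne q t hq ht ((lam k:ℤ) - (lam i:ℤ) - 1) ((i:ℤ) - (k:ℤ)))
    (pow_ne q t hq ht ((lam k:ℤ) - (lam i:ℤ)) ((i:ℤ) - 1 - (k:ℤ)))
    (pow_ne q t hq ht ((lam k:ℤ) - (lam i:ℤ) - 1) ((i:ℤ) - (k:ℤ) + 1))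
    (mulpow q t hq ht _ _ _ _ _ _ _ _ (by ring) (by ring))
  rw [invpow q t hq ht ((lam k:ℤ) - (lam i:ℤ)) ((i:ℤ) - 1 - (k:ℤ))
      ((lam i:ℤ) - (lam k:ℤ)) ((k:ℤ) - (i:ℤ) + 1) (by ring) (by ring),
    invpow q t hq ht ((lam k:ℤ) - (lam i:ℤ) - 1) ((i:ℤ) - (k:ℤ) + 1)
      ((lam i:ℤ) - (lam k:ℤ) + 1) ((k:ℤ) - (i:ℤ) - 1) (by ring) (by ring),
    invpow q t hq ht ((lam k:ℤ) - (lam i:ℤ)) ((i:ℤ) - (k:ℤ))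
      ((lam i:ℤ) - (lam k:ℤ)) ((k:ℤ) - (i:ℤ)) (by ring) (by ring),
    invpow q t hq ht ((lam k:ℤ) - (lam i:ℤ) - 1) ((i:ℤ) - (k:ℤ))
      ((lam i:ℤ) - (lam k:ℤ) + 1) ((k:ℤ) - (i:ℤ)) (by ring) (by ring)] at e
  linear_combination e

lemma myD (q t : K) (hq : q ≠ 0) (ht : t ≠ 0) (lam : ℕ → ℕ) (L i : ℕ)
    (mu : ℕ → ℕ) (hmu : mu = fun k => if k = i then lam i + 1 else lam k) :
    (∏ j ∈ Icc (i+1) L,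
        ((1 - q ^ ((mu j:ℤ) - (mu i:ℤ) + 1) * t ^ ((i:ℤ) - (j:ℤ) - 1)) *
          (1 - q ^ ((mu (j+1):ℤ) - (mu i:ℤ)) * t ^ ((i:ℤ) - (j:ℤ)))))
      * (∏ j ∈ Icc (i+1) L, (1 - q ^ ((lam i:ℤ) - (lam (j+1):ℤ)) * t ^ ((j:ℤ) - (i:ℤ) + 1)))
      * (∏ j ∈ Icc (i+1) L, (1 - q ^ ((lam i:ℤ) + 1 - (lam j:ℤ)) * t ^ ((j:ℤ) - (i:ℤ)))) =
    (∏ j ∈ Icc (i+1) L,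
        ((1 - q ^ ((mu (j+1):ℤ) - (mu i:ℤ) + 1) * t ^ ((i:ℤ) - (j:ℤ) - 1)) *
          (1 - q ^ ((mu j:ℤ) - (mu i:ℤ)) * t ^ ((i:ℤ) - (j:ℤ)))))
      * (∏ j ∈ Icc (i+1) L, (1 - q ^ ((lam i:ℤ) - (lam j:ℤ)) * t ^ ((j:ℤ) - (i:ℤ) + 1)))
      * (∏ j ∈ Icc (i+1) L, (1 - q ^ ((lam i:ℤ) + 1 - (lam (j+1):ℤ)) * t ^ ((j:ℤ) - (i:ℤ)))) := by
  have hmui : mu i = lam i + 1 := by simp [hmu]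
  have hmuk : ∀ k, k ≠ i → mu k = lam k := by intro k hk; simp [hmu, hk]
  rw [← Finset.prod_mul_distrib, ← Finset.prod_mul_distrib,
    ← Finset.prod_mul_distrib, ← Finset.prod_mul_distrib]
  apply Finset.prod_congr rfl
  intro j hj
  simp only [mem_Icc] at hj
  have h1 : mu j = lam j := hmuk j (by omega)
  have h2 : mu (j+1) = lam (j+1) := hmuk (j+1) (by omega)
  have e := myflip4
    (pow_ne q t hq ht ((mu j:ℤ) - (mu i:ℤ) + 1) ((i:ℤ) - (j:ℤ) - 1))
    (pow_ne q t hq ht ((mu (j+1):ℤ) - (mu i:ℤ)) ((i:ℤ) - (j:ℤ)))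
    (pow_ne q t hq ht ((mu (j+1):ℤ) - (mu i:ℤ) + 1) ((i:ℤ) - (j:ℤ) - 1))
    (pow_ne q t hq ht ((mu j:ℤ) - (mu i:ℤ)) ((i:ℤ) - (j:ℤ)))
    (mulpow q t hq ht _ _ _ _ _ _ _ _ (by ring) (by ring))
  rw [invpow q t hq ht ((mu (j+1):ℤ) - (mu i:ℤ) + 1) ((i:ℤ) - (j:ℤ) - 1)
      ((lam i:ℤ) - (lam (j+1):ℤ)) ((j:ℤ) - (i:ℤ) + 1) (by rw [h2, hmui]; push_cast; ring) (by ring),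
    invpow q t hq ht ((mu j:ℤ) - (mu i:ℤ)) ((i:ℤ) - (j:ℤ))
      ((lam i:ℤ) + 1 - (lam j:ℤ)) ((j:ℤ) - (i:ℤ)) (by rw [h1, hmui]; push_cast; ring) (by ring),
    invpow q t hq ht ((mu j:ℤ) - (mu i:ℤ) + 1) ((i:ℤ) - (j:ℤ) - 1)
      ((lam i:ℤ) - (lam j:ℤ)) ((j:ℤ) - (i:ℤ) + 1) (by rw [h1, hmui]; push_cast; ring) (by ring),
    invpow q t hq ht ((mu (j+1):ℤ) - (mu i:ℤ)) ((i:ℤ) - (j:ℤ))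
      ((lam i:ℤ) + 1 - (lam (j+1):ℤ)) ((j:ℤ) - (i:ℤ)) (by rw [h2, hmui]; push_cast; ring) (by ring)] at e
  linear_combination e

lemma myE0 (q t : K) (hq : q ≠ 0) (ht : t ≠ 0) (m : ℤ) :
    (-q) * ((1 - t⁻¹) * (1 - q ^ (m-1)) * (1 - q ^ (-m) * t)) =
      (1 - t) * ((1 - q ^ (1-m)) * (1 - q ^ m * t⁻¹)) := by
  have hQ : q ^ m ≠ 0 := zpow_ne_zero _ hq
  rw [zpow_sub₀ hq, zpow_sub₀ hq, zpow_neg, zpow_one]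
  field_simp
  ring
end

theorem stmt0 {K : Type*} [Field K] (q t : K) (hq : q ≠ 0) (ht : t ≠ 0)
    (lam : ℕ → ℕ) (L i : ℕ)
    (hmono : ∀ k, 1 ≤ k → lam (k + 1) ≤ lam k)
    (hL : ∀ k, L < k → lam k = 0)
    (hi : 1 ≤ i) (hiL : i ≤ L)
    (hadd : i = 1 ∨ lam i < lam (i - 1))
    (mu : ℕ → ℕ) (hmu : mu = fun k => if k = i then lam i + 1 else lam k)
    (hden1 : cP' q t lam L ≠ 0)
    (hden2 : cP q t mu L ≠ 0)
    (hden3 : ∀ j ∈ Finset.Icc 1 (i - 1),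
      1 - q ^ ((lam i : ℤ) - (lam j : ℤ)) * t ^ ((j : ℤ) - (i : ℤ)) ≠ 0 ∧
      1 - q ^ ((lam i : ℤ) - (lam j : ℤ) + 1) * t ^ ((j : ℤ) - (i : ℤ)) ≠ 0)
    (hden4 : 1 - q ^ ((mu (i + 1) : ℤ) - (mu i : ℤ) + 1) * t⁻¹ ≠ 0)
    (hden5 : ∀ j ∈ Finset.Icc (i + 1) L,
      1 - q ^ ((mu (j + 1) : ℤ) - (mu i : ℤ) + 1) * t ^ ((i : ℤ) - (j : ℤ) - 1) ≠ 0 ∧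
      1 - q ^ ((mu j : ℤ) - (mu i : ℤ)) * t ^ ((i : ℤ) - (j : ℤ)) ≠ 0) :
    cP' q t mu L / cP' q t lam L * (cP q t lam L / cP q t mu L) * Aplus q t lam i =
      -q * Aminus q t mu L i := by
  have anti := myanti lam hmono
  have hmui : mu i = lam i + 1 := by simp [hmu]
  have hmuk : ∀ k, k ≠ i → mu k = lam k := by intro k hk; simp [hmu, hk]
  -- equations
  have hA1 := myA1 q t lam L i hmono hL hi hiL hadd mu hmu
  have hA2 := myA2 q t lam L i hmono hL hi hiL hadd mu hmu
  have hC := myC q t hq ht lam i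
  have hD := myD q t hq ht lam L i mu hmu
  have hB1 := myB1 q t lam L i hmono hL hi hiL
  have hB2 := myB2 q t lam L i hmono hL hi hiL
  simp only [mysplitLeft _ i L hiL, show ((lam i:ℤ) + 1 - (lam i:ℤ)) = (1:ℤ) from by ring,
    sub_self, zero_add, zpow_zero, zpow_one, one_mul, mul_one] at hB1 hB2
  have hE : (-q) * ((1 - t⁻¹) * (1 - q ^ ((mu (i+1):ℤ) - (mu i:ℤ))) *
        (1 - q ^ ((lam i:ℤ) - (lam (i+1):ℤ)) * t)) =
      (1 - t) * ((1 - q ^ ((lam i:ℤ) + 1 - (lam (i+1):ℤ))) *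
        (1 - q ^ ((mu (i+1):ℤ) - (mu i:ℤ) + 1) * t⁻¹)) := by
    have h2 : mu (i+1) = lam (i+1) := hmuk _ (by omega)
    have h0 := myE0 q t hq ht ((mu (i+1):ℤ) - (mu i:ℤ) + 1)
    rw [show (mu (i+1):ℤ) - (mu i:ℤ) + 1 - 1 = (mu (i+1):ℤ) - (mu i:ℤ) from by ring,
      show -((mu (i+1):ℤ) - (mu i:ℤ) + 1) = (lam i:ℤ) - (lam (i+1):ℤ) from by
        rw [h2, hmui]; push_cast; ring,
      show (1:ℤ) - ((mu (i+1):ℤ) - (mu i:ℤ) + 1) = (lam i:ℤ) + 1 - (lam (i+1):ℤ) from by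
        rw [h2, hmui]; push_cast; ring] at h0
    exact h0
  -- nonzero facts
  have hfac1 : ∀ k ∈ Icc 1 L, ∀ j ∈ Icc 1 (lam k),
      (1 - q ^ ((lam k:ℤ) - (j:ℤ) + 1) * t ^ ((conjP lam L j:ℤ) - (k:ℤ))) ≠ 0 := by
    rw [cP', Finset.prod_ne_zero_iff] at hden1
    intro k hk j hj
    exact (Finset.prod_ne_zero_iff.mp (hden1 k hk)) j hj
  have hfac2 : ∀ k ∈ Icc 1 L, ∀ j ∈ Icc 1 (mu k),
      (1 - q ^ ((mu k:ℤ) - (j:ℤ)) * t ^ ((conjP mu L j:ℤ) - (k:ℤ) + 1)) ≠ 0 := by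
    rw [cP, Finset.prod_ne_zero_iff] at hden2
    intro k hk j hj
    exact (Finset.prod_ne_zero_iff.mp (hden2 k hk)) j hj
  have hkimem : i ∈ Icc 1 L := mem_Icc.mpr ⟨hi, hiL⟩
  have hRl' : (∏ j ∈ Icc 1 (lam i),
      (1 - q ^ ((lam i:ℤ) - (j:ℤ) + 1) * t ^ ((conjP lam L j:ℤ) - (i:ℤ)))) ≠ 0 :=
    Finset.prod_ne_zero_iff.mpr (fun j hj => hfac1 i hkimem j hj)
  have hO' : (∏ k ∈ Icc 1 (i-1),
      (1 - q ^ ((lam k:ℤ) - (lam i:ℤ)) * t ^ ((i:ℤ) - 1 - (k:ℤ)))) ≠ 0 := by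
    apply Finset.prod_ne_zero_iff.mpr
    intro k hk
    simp only [mem_Icc] at hk
    have hi2 : 2 ≤ i := by omega
    have hlt : lam i < lam (i-1) := by rcases hadd with h | h; omega; exact h
    have hlamk : lam i + 1 ≤ lam k := le_trans (by omega) (anti k (i-1) hk.1 hk.2)
    have h := hfac1 k (mem_Icc.mpr ⟨hk.1, by omega⟩) (lam i + 1) (mem_Icc.mpr ⟨by omega, hlamk⟩)
    rw [myconjlam lam L i hmono hi hiL hadd, Nat.cast_sub hi, Nat.cast_one,
      show ((lam k:ℤ) - ((lam i + 1 : ℕ):ℤ) + 1) = (lam k:ℤ) - (lam i:ℤ) from by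
        push_cast; ring] at h
    exact h
  have hN : (∏ k ∈ Icc 1 (i-1),
      (1 - q ^ ((lam k:ℤ) - (lam i:ℤ) - 1) * t ^ ((i:ℤ) - (k:ℤ) + 1))) ≠ 0 := by
    apply Finset.prod_ne_zero_iff.mpr
    intro k hk
    simp only [mem_Icc] at hk
    have hi2 : 2 ≤ i := by omega
    have hlt : lam i < lam (i-1) := by rcases hadd with h | h; omega; exact h
    have hlamk : lam i + 1 ≤ lam k := le_trans (by omega) (anti k (i-1) hk.1 hk.2)
    have h := hfac2 k (mem_Icc.mpr ⟨hk.1, by omega⟩) (lam i + 1)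
      (mem_Icc.mpr ⟨by omega, by rw [hmuk k (by omega)]; omega⟩)
    rw [hmuk k (by omega), myconjmu lam L i hmono hi hiL hadd mu hmu,
      show ((lam k:ℤ) - ((lam i + 1 : ℕ):ℤ)) = (lam k:ℤ) - (lam i:ℤ) - 1 from by
        push_cast; ring] at h
    exact h
  have hRm : (∏ j ∈ Icc 1 (lam i),
      (1 - q ^ ((lam i:ℤ) - (j:ℤ) + 1) * t ^ ((conjP lam L j:ℤ) - (i:ℤ) + 1))) ≠ 0 := by
    apply Finset.prod_ne_zero_iff.mpr
    intro j hj
    simp only [mem_Icc] at hj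
    have h := hfac2 i hkimem j (mem_Icc.mpr ⟨hj.1, by rw [hmui]; omega⟩)
    rw [hmui, myconjeq lam L i mu hmu j (by omega),
      show (((lam i + 1 : ℕ):ℤ) - (j:ℤ)) = (lam i:ℤ) - (j:ℤ) + 1 from by push_cast; ring] at h
    exact h
  have het : (1 : K) - t ≠ 0 := by
    have h := hfac2 i hkimem (lam i + 1) (mem_Icc.mpr ⟨by omega, by rw [hmui]⟩)
    rw [hmui, myconjmu lam L i hmono hi hiL hadd mu hmu, sub_self, zpow_zero, one_mul,
      show ((i:ℤ) - (i:ℤ) + 1) = (1:ℤ) from by ring, zpow_one] at h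
    exact h
  have hPD : (∏ k ∈ Icc 1 (i-1),
      ((1 - q ^ ((lam i:ℤ) - (lam k:ℤ)) * t ^ ((k:ℤ) - (i:ℤ))) *
        (1 - q ^ ((lam i:ℤ) - (lam k:ℤ) + 1) * t ^ ((k:ℤ) - (i:ℤ))))) ≠ 0 :=
    Finset.prod_ne_zero_iff.mpr (fun k hk => mul_ne_zero (hden3 k hk).1 (hden3 k hk).2)
  have hQD : (∏ j ∈ Icc (i+1) L,
      ((1 - q ^ ((mu (j+1):ℤ) - (mu i:ℤ) + 1) * t ^ ((i:ℤ) - (j:ℤ) - 1)) *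
        (1 - q ^ ((mu j:ℤ) - (mu i:ℤ)) * t ^ ((i:ℤ) - (j:ℤ))))) ≠ 0 :=
    Finset.prod_ne_zero_iff.mpr (fun j hj => mul_ne_zero (hden5 j hj).1 (hden5 j hj).2)
  have hS1d : (∏ j ∈ Icc (i+1) L,
      (1 - q ^ ((lam i:ℤ) + 1 - (lam j:ℤ)) * t ^ ((j:ℤ) - (i:ℤ)))) ≠ 0 := by
    apply Finset.prod_ne_zero_iff.mpr
    intro j hj
    simp only [mem_Icc] at hj
    have h := myflip_ne (pow_ne q t hq ht ((mu j:ℤ) - (mu i:ℤ)) ((i:ℤ) - (j:ℤ))) (hden5 j (mem_Icc.mpr hj)).2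
    rw [invpow q t hq ht ((mu j:ℤ) - (mu i:ℤ)) ((i:ℤ) - (j:ℤ))
      ((lam i:ℤ) + 1 - (lam j:ℤ)) ((j:ℤ) - (i:ℤ))
      (by rw [hmuk j (by omega), hmui]; push_cast; ring) (by ring)] at h
    exact h
  have hS2d : (∏ j ∈ Icc (i+1) L,
      (1 - q ^ ((lam i:ℤ) - (lam (j+1):ℤ)) * t ^ ((j:ℤ) - (i:ℤ) + 1))) ≠ 0 := by
    apply Finset.prod_ne_zero_iff.mpr
    intro j hj
    simp only [mem_Icc] at hj
    have h := myflip_ne (pow_ne q t hq ht ((mu (j+1):ℤ) - (mu i:ℤ) + 1) ((i:ℤ) - (j:ℤ) - 1)) (hden5 j (mem_Icc.mpr hj)).1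
    rw [invpow q t hq ht ((mu (j+1):ℤ) - (mu i:ℤ) + 1) ((i:ℤ) - (j:ℤ) - 1)
      ((lam i:ℤ) - (lam (j+1):ℤ)) ((j:ℤ) - (i:ℤ) + 1)
      (by rw [hmuk (j+1) (by omega), hmui]; push_cast; ring) (by ring)] at h
    exact h
  have hV : (1 : K) - q ^ ((lam i:ℤ) - (lam (i+1):ℤ)) * t ≠ 0 := by
    have hx : (q ^ ((mu (i+1):ℤ) - (mu i:ℤ) + 1) * t⁻¹) ≠ 0 :=
      mul_ne_zero (zpow_ne_zero _ hq) (inv_ne_zero ht)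
    have h := myflip_ne hx hden4
    rw [mul_inv, inv_inv, ← zpow_neg,
      show -((mu (i+1):ℤ) - (mu i:ℤ) + 1) = (lam i:ℤ) - (lam (i+1):ℤ) from by
        rw [hmuk (i+1) (by omega), hmui]; push_cast; ring] at h
    exact h
  -- endgame
  unfold Aplus Aminus
  rw [Finset.prod_div_distrib, Finset.prod_div_distrib]
  set cpm' := cP' q t mu L with hs1
  set cpl' := cP' q t lam L with hs2
  set cpm := cP q t mu L with hs3
  set cpl := cP q t lam L with hs4
  set Rl' := ∏ j ∈ Icc 1 (lam i),
    (1 - q ^ ((lam i:ℤ) - (j:ℤ) + 1) * t ^ ((conjP lam L j:ℤ) - (i:ℤ))) with hs5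
  set Rm' := ∏ j ∈ Icc 1 (lam i),
    (1 - q ^ ((lam i:ℤ) - (j:ℤ) + 2) * t ^ ((conjP lam L j:ℤ) - (i:ℤ))) with hs6
  set Rl := ∏ j ∈ Icc 1 (lam i),
    (1 - q ^ ((lam i:ℤ) - (j:ℤ)) * t ^ ((conjP lam L j:ℤ) - (i:ℤ) + 1)) with hs7
  set Rm := ∏ j ∈ Icc 1 (lam i),
    (1 - q ^ ((lam i:ℤ) - (j:ℤ) + 1) * t ^ ((conjP lam L j:ℤ) - (i:ℤ) + 1)) with hs8
  set O' := ∏ k ∈ Icc 1 (i-1),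
    (1 - q ^ ((lam k:ℤ) - (lam i:ℤ)) * t ^ ((i:ℤ) - 1 - (k:ℤ))) with hs9
  set N' := ∏ k ∈ Icc 1 (i-1),
    (1 - q ^ ((lam k:ℤ) - (lam i:ℤ)) * t ^ ((i:ℤ) - (k:ℤ))) with hs10
  set Ob := ∏ k ∈ Icc 1 (i-1),
    (1 - q ^ ((lam k:ℤ) - (lam i:ℤ) - 1) * t ^ ((i:ℤ) - (k:ℤ))) with hs11
  set Nb := ∏ k ∈ Icc 1 (i-1),
    (1 - q ^ ((lam k:ℤ) - (lam i:ℤ) - 1) * t ^ ((i:ℤ) - (k:ℤ) + 1)) with hs12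
  set PN := ∏ k ∈ Icc 1 (i-1),
    ((1 - q ^ ((lam i:ℤ) - (lam k:ℤ)) * t ^ ((k:ℤ) - (i:ℤ) + 1)) *
      (1 - q ^ ((lam i:ℤ) - (lam k:ℤ) + 1) * t ^ ((k:ℤ) - (i:ℤ) - 1))) with hs13
  set PD := ∏ k ∈ Icc 1 (i-1),
    ((1 - q ^ ((lam i:ℤ) - (lam k:ℤ)) * t ^ ((k:ℤ) - (i:ℤ))) *
      (1 - q ^ ((lam i:ℤ) - (lam k:ℤ) + 1) * t ^ ((k:ℤ) - (i:ℤ)))) with hs14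
  set QN := ∏ j ∈ Icc (i+1) L,
    ((1 - q ^ ((mu j:ℤ) - (mu i:ℤ) + 1) * t ^ ((i:ℤ) - (j:ℤ) - 1)) *
      (1 - q ^ ((mu (j+1):ℤ) - (mu i:ℤ)) * t ^ ((i:ℤ) - (j:ℤ)))) with hs15
  set QD := ∏ j ∈ Icc (i+1) L,
    ((1 - q ^ ((mu (j+1):ℤ) - (mu i:ℤ) + 1) * t ^ ((i:ℤ) - (j:ℤ) - 1)) *
      (1 - q ^ ((mu j:ℤ) - (mu i:ℤ)) * t ^ ((i:ℤ) - (j:ℤ)))) with hs16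
  set S1d := ∏ j ∈ Icc (i+1) L,
    (1 - q ^ ((lam i:ℤ) + 1 - (lam j:ℤ)) * t ^ ((j:ℤ) - (i:ℤ))) with hs17
  set S1n := ∏ j ∈ Icc (i+1) L,
    (1 - q ^ ((lam i:ℤ) + 1 - (lam (j+1):ℤ)) * t ^ ((j:ℤ) - (i:ℤ))) with hs18
  set S2d := ∏ j ∈ Icc (i+1) L,
    (1 - q ^ ((lam i:ℤ) - (lam (j+1):ℤ)) * t ^ ((j:ℤ) - (i:ℤ) + 1)) with hs19
  set S2n := ∏ j ∈ Icc (i+1) L,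
    (1 - q ^ ((lam i:ℤ) - (lam j:ℤ)) * t ^ ((j:ℤ) - (i:ℤ) + 1)) with hs20
  set W := (1 : K) - q ^ ((lam i:ℤ) + 1 - (lam (i+1):ℤ)) with hs21
  set V := (1 : K) - q ^ ((lam i:ℤ) - (lam (i+1):ℤ)) * t with hs22
  set pn := (1 : K) - q ^ ((mu (i+1):ℤ) - (mu i:ℤ)) with hs23
  set pd := (1 : K) - q ^ ((mu (i+1):ℤ) - (mu i:ℤ) + 1) * t⁻¹ with hs24
  have hG7 : (1-q) * Rm' * Rl * pd * QD = (-q) * ((1-t⁻¹) * pn * QN * Rm * Rl') := by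
    apply mul_right_cancel₀ (b := S1d * (V * S2d))
      (mul_ne_zero hS1d (mul_ne_zero hV hS2d))
    linear_combination (Rl*V*S2d*pd*QD) * hB1 - (pd*QD*Rl'*W*S1n) * hB2 -
      (pd*Rl'*W*Rm*(1-t)) * hD - (Rm*Rl'*QN*S2d*S1d) * hE
  have hG : cpm' * cpl * (1-t) * PN * pd * QD =
      (-q) * ((1-t⁻¹) * pn * QN) * cpl' * cpm * PD := by
    apply mul_right_cancel₀ (b := O' * Rl' * (Nb * Rm))
      (mul_ne_zero (mul_ne_zero hO' hRl') (mul_ne_zero hN hRm))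
    linear_combination (cpl*(1-t)*PN*pd*QD*Nb*Rm) * hA1 -
      (cpl'*(1-q)*N'*Rm'*PN*pd*QD) * hA2 +
      (cpl'*(1-q)*Rm'*pd*QD*cpm*Rl) * hC +
      (cpl'*cpm*O'*Nb*PD) * hG7
  have e1 : cpl' * cpl'⁻¹ = 1 := mul_inv_cancel₀ hden1
  have e2 : cpm * cpm⁻¹ = 1 := mul_inv_cancel₀ hden2
  have e3 : PD * PD⁻¹ = 1 := mul_inv_cancel₀ hPD
  have e4 : pd * pd⁻¹ = 1 := mul_inv_cancel₀ hden4
  have e5 : QD * QD⁻¹ = 1 := mul_inv_cancel₀ hQD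
  apply mul_left_cancel₀ (show (cpl' * cpm * PD * pd * QD) ≠ 0 from
    mul_ne_zero (mul_ne_zero (mul_ne_zero (mul_ne_zero hden1 hden2) hPD) hden4) hQD)
  simp only [div_eq_mul_inv]
  linear_combination (cpm'*cpl*(1-t)*PN*pd*QD*(cpm*cpm⁻¹)*(PD*PD⁻¹))*e1 +
    (cpm'*cpl*(1-t)*PN*pd*QD*(PD*PD⁻¹))*e2 +
    (cpm'*cpl*(1-t)*PN*pd*QD)*e3 + hG -
    ((-q)*((1-t⁻¹)*pn*QN)*cpl'*cpm*PD*(QD*QD⁻¹))*e4 -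
    ((-q)*((1-t⁻¹)*pn*QN)*cpl'*cpm*PD)*e5

end
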